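/- Let (S, L) be an abstract cubic and suppose there exists a sequence of pairs of triples ((x_n, y_n, z_n), (x_n', y_n, z_n')), n ∈ ℕ, with (x_n, y_n, z_n) ∈ L and (x_n', y_n, z_n') ∈ L, such that the points x_n are pairwise distinct and x_n ∉ {y_m, z_m, x_m', z_m'} for all m, n ∈ ℕ. Then B₀ is not the normal closure in G_S of any finite subset of G_S. -/

import Mathlib

/-- The defining relators of the reflection group of an abstract cubic `(S, L)`:
`(t_x)^2` for all `x`, and `(t_x t_y t_z)^2` for all collinear triples `(x,y,z) ∈ L`. -/
def cubicRels (S : Type*) (L : S → S → S → Prop) : Set (FreeGroup S) :=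
  {r | (∃ x : S, r = FreeGroup.of x ^ 2) ∨
    ∃ x y z : S, L x y z ∧ r = (FreeGroup.of x * FreeGroup.of y * FreeGroup.of z) ^ 2}

/-- The reflection group `G_S` of an abstract cubic, as a presented group. -/
abbrev ReflGroup (S : Type*) (L : S → S → S → Prop) : Type _ :=
  PresentedGroup (cubicRels S L)

/-- The generator (reflection) `t_x` of the reflection group. -/
def tgen (S : Type*) (L : S → S → S → Prop) (x : S) : ReflGroup S L :=
  PresentedGroup.of x

/-- The set of generators of the subgroup `B₀ ⊆ G_S`: elements `t_a t_b t_c t_{a'} t_b t_{c'}`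
for collinear triples `(a,b,c) ∈ L` and `(a',b,c') ∈ L` sharing the middle point `b`.
`B₀` itself is the normal closure of this set in `G_S`. -/
def B0Gens (S : Type*) (L : S → S → S → Prop) : Set (ReflGroup S L) :=
  {g | ∃ a b c a' c' : S, L a b c ∧ L a' b c' ∧
    g = tgen S L a * tgen S L b * tgen S L c * tgen S L a' * tgen S L b * tgen S L c'}

namespace Stmt6Aux

/-- Reflection of `ℤ` at the point `p`. -/
def irefl (p : ℤ) : Equiv.Perm ℤ :=
  Function.Involutive.toPerm (fun t => 2 * p - t) (fun t => by ring)

lemma irefl_apply (p t : ℤ) : irefl p t = 2 * p - t := rfl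

lemma irefl_sq (p : ℤ) : irefl p ^ 2 = 1 := by
  ext t
  simp [sq, Equiv.Perm.mul_apply, irefl_apply]

lemma irefl_triple (p q s : ℤ) : irefl p * irefl q * irefl s = irefl (p - q + s) := by
  ext t
  simp [Equiv.Perm.mul_apply, irefl_apply]
  ring

/-- Any element of the normal closure of a set lies in the normal closure of a finite subset. -/
lemma mem_normalClosure_finite {G : Type*} [Group G] {B : Set G} {g : G}
    (hg : g ∈ Subgroup.normalClosure B) :
    ∃ F : Set G, F ⊆ B ∧ F.Finite ∧ g ∈ Subgroup.normalClosure F := by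
  refine Subgroup.closure_induction (k := Group.conjugatesOfSet B)
    (p := fun g _ => ∃ F : Set G, F ⊆ B ∧ F.Finite ∧ g ∈ Subgroup.normalClosure F)
    ?_ ?_ ?_ ?_ hg
  · intro a ha
    obtain ⟨b, hb, hconj⟩ := Group.mem_conjugatesOfSet_iff.mp ha
    obtain ⟨c, hc⟩ := isConj_iff.mp hconj
    refine ⟨{b}, Set.singleton_subset_iff.mpr hb, Set.finite_singleton b, ?_⟩
    have hbmem : b ∈ Subgroup.normalClosure ({b} : Set G) :=
      Subgroup.subset_normalClosure rfl
    have := (Subgroup.normalClosure_normal (s := ({b} : Set G))).conj_mem b hbmem c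
    rwa [hc] at this
  · exact ⟨∅, Set.empty_subset _, Set.finite_empty, Subgroup.one_mem _⟩
  · rintro a b _ _ ⟨Fa, hFa, hFaf, ha⟩ ⟨Fb, hFb, hFbf, hb⟩
    refine ⟨Fa ∪ Fb, Set.union_subset hFa hFb, hFaf.union hFbf, Subgroup.mul_mem _ ?_ ?_⟩
    · exact Subgroup.normalClosure_mono Set.subset_union_left ha
    · exact Subgroup.normalClosure_mono Set.subset_union_right hb
  · rintro a _ ⟨F, hF, hFf, ha⟩
    exact ⟨F, hF, hFf, Subgroup.inv_mem _ ha⟩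

/-- A finite subset of a normal closure lies in the normal closure of a finite subset. -/
lemma subset_normalClosure_finite {G : Type*} [Group G] {B T : Set G} (hT : T.Finite)
    (h : T ⊆ Subgroup.normalClosure B) :
    ∃ F : Set G, F ⊆ B ∧ F.Finite ∧ T ⊆ Subgroup.normalClosure F := by
  refine Set.Finite.induction_on
    (motive := fun T _ => T ⊆ (Subgroup.normalClosure B : Set G) →
      ∃ F : Set G, F ⊆ B ∧ F.Finite ∧ T ⊆ Subgroup.normalClosure F) T hT
    (fun _ => ⟨∅, Set.empty_subset _, Set.finite_empty, Set.empty_subset _⟩) ?_ h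
  intro a s ha hs ih h
  obtain ⟨F, hF, hFf, hsub⟩ := ih (fun t ht => h (Set.mem_insert_of_mem _ ht))
  obtain ⟨Fa, hFa, hFaf, hamem⟩ := mem_normalClosure_finite (h (Set.mem_insert a s))
  refine ⟨F ∪ Fa, Set.union_subset hF hFa, hFf.union hFaf, ?_⟩
  intro t ht
  rcases ht with rfl | ht
  · exact Subgroup.normalClosure_mono Set.subset_union_right hamem
  · exact Subgroup.normalClosure_mono Set.subset_union_left (hsub ht)

end Stmt6Aux

open Stmt6Aux in
/-- Witness points for a finite subset of `B0Gens`. -/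
lemma b0_witnesses {S : Type*} {L : S → S → S → Prop} {F : Set (ReflGroup S L)}
    (hF : F.Finite) (hFB : F ⊆ B0Gens S L) :
    ∃ P : Set S, P.Finite ∧ ∀ g ∈ F, ∃ a b c a' c', L a b c ∧ L a' b c' ∧
      g = tgen S L a * tgen S L b * tgen S L c * tgen S L a' * tgen S L b * tgen S L c' ∧
      a ∈ P ∧ b ∈ P ∧ c ∈ P ∧ a' ∈ P ∧ c' ∈ P := by
  refine Set.Finite.induction_on
    (motive := fun F _ => F ⊆ B0Gens S L → ∃ P : Set S, P.Finite ∧ ∀ g ∈ F, ∃ a b c a' c',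
      L a b c ∧ L a' b c' ∧
      g = tgen S L a * tgen S L b * tgen S L c * tgen S L a' * tgen S L b * tgen S L c' ∧
      a ∈ P ∧ b ∈ P ∧ c ∈ P ∧ a' ∈ P ∧ c' ∈ P) F hF
    (fun _ => ⟨∅, Set.finite_empty, fun g hg => absurd hg (Set.notMem_empty g)⟩) ?_ hFB
  intro g s hg hs ih hFB
  obtain ⟨P, hPf, hPw⟩ := ih (fun t ht => hFB (Set.mem_insert_of_mem _ ht))
  obtain ⟨a, b, c, a', c', h1, h2, heq⟩ := hFB (Set.mem_insert g s)
  refine ⟨P ∪ {a, b, c, a', c'}, hPf.union (Set.toFinite _), ?_⟩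
  intro t ht
  rcases ht with rfl | ht
  · exact ⟨a, b, c, a', c', h1, h2, heq, by simp, by simp, by simp, by simp, by simp⟩
  · obtain ⟨a₀, b₀, c₀, a₀', c₀', k1, k2, keq, p1, p2, p3, p4, p5⟩ := hPw t ht
    exact ⟨a₀, b₀, c₀, a₀', c₀', k1, k2, keq, Or.inl p1, Or.inl p2, Or.inl p3,
      Or.inl p4, Or.inl p5⟩

/-- given a sequence of pairs of collinear triples `(xₙ, yₙ, zₙ), (xₙ', yₙ, zₙ')`
with the `xₙ` pairwise distinct and each `xₙ` distinct from all `y_m, z_m, x_m', z_m'`, the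
subgroup `B₀` is not the normal closure in `G_S` of any finite subset. -/
theorem stmt_6 {S : Type*} (L : S → S → S → Prop)
    (hsym₁ : ∀ x y z, L x y z → L y x z)
    (hsym₂ : ∀ x y z, L x y z → L x z y)
    (huniq : ∀ x y z z', L x y z → L x y z' → x ≠ y → z = z')
    (x y z x' z' : ℕ → S)
    (hL : ∀ n, L (x n) (y n) (z n))
    (hL' : ∀ n, L (x' n) (y n) (z' n))
    (hxinj : Function.Injective x)
    (hdist : ∀ m n : ℕ, x n ≠ y m ∧ x n ≠ z m ∧ x n ≠ x' m ∧ x n ≠ z' m) :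
    ∀ T : Set (ReflGroup S L), T.Finite →
      Subgroup.normalClosure T ≠ Subgroup.normalClosure (B0Gens S L) := by
  classical
  intro T hT heq
  open Stmt6Aux in
  -- T is contained in the normal closure of a finite subset F of B0Gens
  have hTsub : T ⊆ (Subgroup.normalClosure (B0Gens S L) : Set (ReflGroup S L)) := by
    rw [← heq]; exact Subgroup.subset_normalClosure
  obtain ⟨F, hFB, hFf, hTF⟩ := Stmt6Aux.subset_normalClosure_finite hT hTsub
  obtain ⟨P, hPf, hPw⟩ := b0_witnesses hFf hFB
  -- choose n₀ with x n₀ ∉ P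
  have hfin : {n : ℕ | x n ∈ P}.Finite := hPf.preimage (Set.injOn_of_injective hxinj)
  obtain ⟨n₀, hn₀⟩ := hfin.infinite_compl.nonempty
  have hxP : x n₀ ∉ P := hn₀
  -- the weight function and the homomorphism
  set w : S → ℤ := fun s => if s = x n₀ then 1 else 0 with hw
  have hrel : ∀ r ∈ cubicRels S L, (FreeGroup.lift (fun s => Stmt6Aux.irefl (w s))) r = 1 := by
    rintro r (⟨a, rfl⟩ | ⟨a, b, c, -, rfl⟩)
    · rw [map_pow, FreeGroup.lift_apply_of, Stmt6Aux.irefl_sq]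
    · rw [map_pow, map_mul, map_mul, FreeGroup.lift_apply_of, FreeGroup.lift_apply_of, FreeGroup.lift_apply_of,
        Stmt6Aux.irefl_triple, Stmt6Aux.irefl_sq]
  set φ : ReflGroup S L →* Equiv.Perm ℤ := PresentedGroup.toGroup hrel with hφ
  have hφt : ∀ s : S, φ (tgen S L s) = Stmt6Aux.irefl (w s) := fun s =>
    PresentedGroup.toGroup.of hrel
  -- φ kills F
  have hkerF : ∀ g ∈ F, φ g = 1 := by
    intro g hg
    obtain ⟨a, b, c, a', c', -, -, rfl, pa, pb, pc, pa', pc'⟩ := hPw g hg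
    have wz : ∀ s ∈ P, w s = 0 := by
      intro s hs
      have : s ≠ x n₀ := fun h => hxP (h ▸ hs)
      simp [hw, this]
    have h2 : Stmt6Aux.irefl 0 * Stmt6Aux.irefl 0 = 1 := by
      rw [← sq]; exact Stmt6Aux.irefl_sq 0
    simp only [map_mul, hφt, wz a pa, wz b pb, wz c pc, wz a' pa', wz c' pc']
    simp [h2]
  -- hence φ kills the normal closure of F, hence all of B₀
  have hncle : Subgroup.normalClosure (B0Gens S L) ≤ φ.ker := by
    rw [← heq]
    refine le_trans (Subgroup.normalClosure_le_normal hTF) ?_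
    exact Subgroup.normalClosure_le_normal (fun g hg => hkerF g hg)
  -- but φ does not kill the generator b_{n₀}
  have hb : (tgen S L (x n₀) * tgen S L (y n₀) * tgen S L (z n₀) * tgen S L (x' n₀) *
      tgen S L (y n₀) * tgen S L (z' n₀)) ∈ B0Gens S L :=
    ⟨x n₀, y n₀, z n₀, x' n₀, z' n₀, hL n₀, hL' n₀, rfl⟩
  have hbker := hncle (Subgroup.subset_normalClosure hb)
  rw [MonoidHom.mem_ker] at hbker
  have wx : w (x n₀) = 1 := by simp [hw]
  have wy : w (y n₀) = 0 := by
    have h := Ne.symm (hdist n₀ n₀).1; simp [hw, h]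
  have wz0 : w (z n₀) = 0 := by
    have h := Ne.symm (hdist n₀ n₀).2.1; simp [hw, h]
  have wx' : w (x' n₀) = 0 := by
    have h := Ne.symm (hdist n₀ n₀).2.2.1; simp [hw, h]
  have wz' : w (z' n₀) = 0 := by
    have h := Ne.symm (hdist n₀ n₀).2.2.2; simp [hw, h]
  simp only [map_mul, hφt, wx, wy, wz0, wx', wz'] at hbker
  have h0 := Equiv.ext_iff.mp hbker 0
  simp [Equiv.Perm.mul_apply, Stmt6Aux.irefl_apply] at h0
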